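/- The Hermitian matrix H = Σᵢ hᵢSᵢ + Σᵢ hᵢ'Tᵢ is invertible if and only if |h| ≠ |h'|, equivalently p := |h|² − |h'|² ≠ 0. -/

import Mathlib

open Matrix Complex

/-- The self-dual generators S₁ = diag(τ₁,−τ₁), S₂ = diag(τ₂,τ₂), S₃ = diag(τ₃,−τ₃). -/
noncomputable def S : Fin 3 → Matrix (Fin 4) (Fin 4) ℂ
  | 0 => !![0, 1, 0, 0; 1, 0, 0, 0; 0, 0, 0, -1; 0, 0, -1, 0]
  | 1 => !![0, -Complex.I, 0, 0; Complex.I, 0, 0, 0; 0, 0, 0, -Complex.I; 0, 0, Complex.I, 0]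
  | 2 => !![1, 0, 0, 0; 0, -1, 0, 0; 0, 0, -1, 0; 0, 0, 0, 1]

/-- The anti-self-dual generators T₁ = [[0,iτ₂],[−iτ₂,0]], T₂ = [[0,τ₂],[τ₂,0]], T₃ = diag(I₂,−I₂). -/
noncomputable def T : Fin 3 → Matrix (Fin 4) (Fin 4) ℂ
  | 0 => !![0, 0, 0, 1; 0, 0, -1, 0; 0, -1, 0, 0; 1, 0, 0, 0]
  | 1 => !![0, 0, 0, -Complex.I; 0, 0, Complex.I, 0; 0, -Complex.I, 0, 0; Complex.I, 0, 0, 0]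
  | 2 => !![1, 0, 0, 0; 0, 1, 0, 0; 0, 0, -1, 0; 0, 0, 0, -1]

/-- H = Σ hᵢSᵢ + Σ hᵢ'Tᵢ is invertible iff |h| ≠ |h'|,
equivalently p = |h|² − |h'|² ≠ 0. -/
theorem H_invertible_iff (h h' : EuclideanSpace ℝ (Fin 3)) :
    (IsUnit (∑ i : Fin 3, (h i : ℂ) • S i + ∑ i : Fin 3, (h' i : ℂ) • T i) ↔ ‖h‖ ≠ ‖h'‖) ∧
    (‖h‖ ≠ ‖h'‖ ↔ ‖h‖ ^ 2 - ‖h'‖ ^ 2 ≠ 0) := by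
  have key : ‖h‖ ≠ ‖h'‖ ↔ ‖h‖ ^ 2 - ‖h'‖ ^ 2 ≠ 0 := by
    rw [sub_ne_zero]
    constructor
    · intro hne heq
      have := (sq_eq_sq_iff_abs_eq_abs _ _).mp heq
      rw [_root_.abs_of_nonneg (norm_nonneg _), _root_.abs_of_nonneg (norm_nonneg _)] at this
      exact hne this
    · intro hne heq
      exact hne (by rw [heq])
  refine ⟨?_, key⟩
  rw [Matrix.isUnit_iff_isUnit_det, isUnit_iff_ne_zero, key]
  have hn : ‖h‖ ^ 2 = h 0 ^ 2 + h 1 ^ 2 + h 2 ^ 2 := by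
    rw [EuclideanSpace.norm_eq, Real.sq_sqrt (by positivity)]
    simp [Fin.sum_univ_three, sq]
  have hn' : ‖h'‖ ^ 2 = h' 0 ^ 2 + h' 1 ^ 2 + h' 2 ^ 2 := by
    rw [EuclideanSpace.norm_eq, Real.sq_sqrt (by positivity)]
    simp [Fin.sum_univ_three, sq]
  have hdet : (∑ i : Fin 3, (h i : ℂ) • S i + ∑ i : Fin 3, (h' i : ℂ) • T i).det
      = (((‖h‖ ^ 2 - ‖h'‖ ^ 2 : ℝ)) : ℂ) ^ 2 := by
    rw [hn, hn']
    simp [Fin.sum_univ_three, S, T, Matrix.det_succ_row_zero, Fin.sum_univ_succ,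
      Matrix.smul_of, show Fin.succAbove (1 : Fin 4) (2 : Fin 3) = 3 from rfl,
      show (Fin.castSucc (2 : Fin 3) : Fin 4) = 2 from rfl,
      show Fin.succAbove (3 : Fin 4) (2 : Fin 3) = 2 from rfl]
    ring_nf
    simp [Complex.I_sq]
    ring
  rw [hdet]
  rw [ne_eq, pow_eq_zero_iff two_ne_zero, Complex.ofReal_eq_zero]
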